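/- Let ρ be a congruence on M = Mon⟨a,b,c,d : ab=ba, cbad=1, cb²=1, a²d=1, cad=0, cbd=0, cd=1⟩. If the element a is invertible in M/ρ, then ρ = M × M. -/

import Mathlib

inductive Letter | a | b | c | d | z
deriving DecidableEq

abbrev W := FreeMonoid Letter
def A : W := FreeMonoid.of .a
def B : W := FreeMonoid.of .b
def C : W := FreeMonoid.of .c
def D : W := FreeMonoid.of .d
def Z : W := FreeMonoid.of .z

/-- The defining relations of `M = Mon⟨a,b,c,d : ab=ba, cbad=1, cb²=1, a²d=1,
cad=0, cbd=0, cd=1⟩`, with the zero realized by the letter `z`. -/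
def relM : W → W → Prop := fun x y =>
  (x = A * B ∧ y = B * A) ∨
  (x = C * B * A * D ∧ y = 1) ∨ (x = C * B * B ∧ y = 1) ∨
  (x = A * A * D ∧ y = 1) ∨
  (x = C * A * D ∧ y = Z) ∨ (x = C * B * D ∧ y = Z) ∨ (x = C * D ∧ y = 1) ∨
  (∃ l : Letter, x = FreeMonoid.of l * Z ∧ y = Z) ∨
  (∃ l : Letter, x = Z * FreeMonoid.of l ∧ y = Z)

def Mcon : Con W := conGen relM

/-- The monoid `M = Mon⟨a,b,c,d : ab=ba, cbad=1, cb²=1, a²d=1, cad=0, cbd=0, cd=1⟩`. -/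
abbrev M := Mcon.Quotient

lemma mcon_of {x y : W} (h : relM x y) : (x : M) = (y : M) :=
  Mcon.eq.mpr (ConGen.Rel.of _ _ h)

lemma z_mul_m (m : M) : (Z : M) * m = (Z : M) := by
  induction m using Con.induction_on with
  | H w =>
    induction w using FreeMonoid.recOn with
    | one => simp
    | of_mul l w ih =>
      have : ((Z * FreeMonoid.of l : W) : M) = (Z : M) :=
        mcon_of (Or.inr (Or.inr (Or.inr (Or.inr (Or.inr (Or.inr (Or.inr (Or.inr ⟨l, rfl, rfl⟩))))))))
      calc (Z : M) * ((FreeMonoid.of l * w : W) : M)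
          = ((Z * FreeMonoid.of l : W) : M) * (w : M) := by
            rw [Con.coe_mul, Con.coe_mul, mul_assoc]
        _ = (Z : M) * (w : M) := by rw [this]
        _ = (Z : M) := ih

lemma m_mul_z (m : M) : m * (Z : M) = (Z : M) := by
  induction m using Con.induction_on with
  | H w =>
    induction w using FreeMonoid.recOn with
    | one => simp
    | of_mul l w ih =>
      have : ((FreeMonoid.of l * Z : W) : M) = (Z : M) :=
        mcon_of (Or.inr (Or.inr (Or.inr (Or.inr (Or.inr (Or.inr (Or.inr (Or.inl ⟨l, rfl, rfl⟩))))))))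
      calc ((FreeMonoid.of l * w : W) : M) * (Z : M)
          = ((FreeMonoid.of l : W) : M) * ((w : M) * (Z : M)) := by
            rw [Con.coe_mul, mul_assoc]
        _ = ((FreeMonoid.of l : W) : M) * (Z : M) := by rw [ih]
        _ = (Z : M) := this

/-- If the image of `a` is invertible in `M / ρ`, then `ρ` is the full congruence. -/
theorem stmt17 (ρ : Con M)
    (h : ∃ x : ρ.Quotient, ((A : M) : ρ.Quotient) * x = 1 ∧ x * ((A : M) : ρ.Quotient) = 1) :
    ρ = ⊤ := by
  obtain ⟨x, hax, hxa⟩ := h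
  set a : ρ.Quotient := ((A : M) : ρ.Quotient)
  set b : ρ.Quotient := ((B : M) : ρ.Quotient)
  set c : ρ.Quotient := ((C : M) : ρ.Quotient)
  set d : ρ.Quotient := ((D : M) : ρ.Quotient)
  set z : ρ.Quotient := ((Z : M) : ρ.Quotient)
  have haad : a * (a * d) = 1 := by
    have : ((A * A * D : W) : M) = (1 : M) :=
      mcon_of (Or.inr (Or.inr (Or.inr (Or.inl ⟨rfl, rfl⟩))))
    have := congrArg (fun m : M => (m : ρ.Quotient)) this
    simpa [mul_assoc] using this
  have hcad : c * (a * d) = z := by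
    have : ((C * A * D : W) : M) = (Z : M) :=
      mcon_of (Or.inr (Or.inr (Or.inr (Or.inr (Or.inl ⟨rfl, rfl⟩)))))
    have := congrArg (fun m : M => (m : ρ.Quotient)) this
    simpa [mul_assoc] using this
  have hcbb : c * (b * b) = 1 := by
    have : ((C * B * B : W) : M) = (1 : M) :=
      mcon_of (Or.inr (Or.inr (Or.inl ⟨rfl, rfl⟩)))
    have := congrArg (fun m : M => (m : ρ.Quotient)) this
    simpa [mul_assoc] using this
  -- x = a*d
  have hx : x = a * d := by
    calc x = x * (a * (a * d)) := by rw [haad, mul_one]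
      _ = (x * a) * (a * d) := by rw [mul_assoc]
      _ = a * d := by rw [hxa, one_mul]
  have hcx : c * x = z := by rw [hx, hcad]
  have hc : c = z := by
    calc c = c * (x * a) := by rw [hxa, mul_one]
      _ = (c * x) * a := by rw [mul_assoc]
      _ = z * a := by rw [hcx]
      _ = ((Z * A : W) : M) := by rw [Con.coe_mul]; rfl
      _ = z := congrArg _ (z_mul_m ((A : W) : M))
  have h1z : (1 : ρ.Quotient) = z := by
    calc (1 : ρ.Quotient) = c * (b * b) := hcbb.symm
      _ = z * (b * b) := by rw [hc]
      _ = z := by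
        have : (Z : M) * ((B * B : W) : M) = (Z : M) := z_mul_m _
        have := congrArg (fun m : M => (m : ρ.Quotient)) this
        simpa using this
  have hall : ∀ q : ρ.Quotient, q = z := by
    intro q
    induction q using Con.induction_on with
    | H m =>
      calc (m : ρ.Quotient) = (m : ρ.Quotient) * 1 := (mul_one _).symm
        _ = (m : ρ.Quotient) * z := by rw [h1z]
        _ = ((m * (Z : M) : M) : ρ.Quotient) := rfl
        _ = z := by rw [m_mul_z]
  refine eq_top_iff.mpr fun m₁ m₂ _ => ?_
  have : ((m₁ : ρ.Quotient)) = (m₂ : ρ.Quotient) := (hall m₁).trans (hall m₂).symm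
  exact ρ.eq.mp this
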